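/- Let p ≥ 2, λ, n, m be natural numbers with m ≥ 1. Let f₀, …, f_λ, h₀, …, h_λ and B_{t,j} (0 ≤ t ≤ n, 1 ≤ j ≤ m) be natural numbers all strictly less than p, and define for 0 ≤ i ≤ n+λ and 1 ≤ j ≤ m the product coefficients p_{ij} = (∑_{s+t=i} f_s·B_{t,j}) mod p and q_{ij} = (∑_{s+t=i} h_s·B_{t,j}) mod p. Let S₁ ≥ p² and S₂ ≥ p² be positive integers, R₁ coprime to S₁ and R₂ coprime to S₂, with modular inverses R₁' mod S₁ and R₂' mod S₂, and set the public encrypted coefficients P_{ij} = (R₁·p_{ij}) mod S₁ and Q_{ij} = (R₂·q_{ij}) mod S₂. Fix natural numbers x₀ < p and α < p, and define the signature elements F = (R₂'·((α·∑_{s=0}^{λ} f_s·x₀^s) mod p)) mod S₂ and H = (R₁'·((α·∑_{s=0}^{λ} h_s·x₀^s) mod p)) mod S₁. Then for all natural numbers u₁, …, u_m: ∑_{j=1}^{m} ∑_{i=0}^{n+λ} (((F·Q_{ij}) mod S₂) mod p)·x₀^i·u_j ≡ ∑_{j=1}^{m} ∑_{i=0}^{n+λ} (((H·P_{ij}) mod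 S₁) mod p)·x₀^i·u_j (mod p). -/
import Mathlib

lemma conv_sum {R : Type*} [CommSemiring R] (L N : ℕ) (a : Fin (L+1) → R)
    (b : Fin (N+1) → R) (x : R) :
    ∑ i ∈ Finset.range (N + L + 1),
        (∑ s : Fin (L+1), ∑ t : Fin (N+1),
          if (s:ℕ) + (t:ℕ) = i then a s * b t else 0) * x ^ i
    = (∑ s : Fin (L+1), a s * x ^ (s:ℕ)) * (∑ t : Fin (N+1), b t * x ^ (t:ℕ)) := by
  rw [Finset.sum_mul_sum]
  simp only [Finset.sum_mul, ite_mul, zero_mul]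
  rw [Finset.sum_comm]
  refine Finset.sum_congr rfl fun s _ => ?_
  rw [Finset.sum_comm]
  refine Finset.sum_congr rfl fun t _ => ?_
  rw [Finset.sum_ite_eq (Finset.range (N + L + 1)) ((s:ℕ)+(t:ℕ)) (fun i => a s * b t * x ^ i)]
  rw [if_pos (Finset.mem_range.mpr (by omega))]
  rw [pow_add]; ring

lemma key_mod (p S R R' : ℕ) (hp : 0 < p) (hS : p^2 ≤ S)
    (hi : R' * R ≡ 1 [MOD S]) (a b : ℕ) (ha : a < p) (hb : b < p) :
    (((R' * a) % S) * ((R * b) % S)) % S = a * b := by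
  have h1 : ((R' * a) % S) * ((R * b) % S) ≡ a * b [MOD S] := by
    calc ((R' * a) % S) * ((R * b) % S)
        ≡ (R' * a) * (R * b) [MOD S] :=
          Nat.ModEq.mul (Nat.mod_modEq _ _) (Nat.mod_modEq _ _)
      _ = (R' * R) * (a * b) := by ring
      _ ≡ 1 * (a * b) [MOD S] := hi.mul_right _
      _ = a * b := one_mul _
  have hab : a * b < S := lt_of_lt_of_le (by nlinarith) hS
  calc (((R' * a) % S) * ((R * b) % S)) % S = (a * b) % S := h1
    _ = a * b := Nat.mod_eq_of_lt hab

lemma pull_sum {R : Type*} [CommSemiring R] (M : ℕ) (A U x : R) (D : ℕ → R) :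
    ∑ i ∈ Finset.range M, A * D i * x ^ i * U
      = A * U * ∑ i ∈ Finset.range M, D i * x ^ i := by
  rw [Finset.mul_sum]; exact Finset.sum_congr rfl fun i _ => by ring

theorem stmt_11 (p lam n m : ℕ) (hp : 2 ≤ p) (hm : 1 ≤ m)
    (fc hc : Fin (lam + 1) → ℕ) (Bc : Fin (n + 1) → Fin m → ℕ)
    (hfc : ∀ s, fc s < p) (hhc : ∀ s, hc s < p) (hBc : ∀ t j, Bc t j < p)
    (S₁ S₂ R₁ R₂ R₁' R₂' : ℕ)
    (hS₁ : p ^ 2 ≤ S₁) (hS₂ : p ^ 2 ≤ S₂) (hS₁pos : 0 < S₁) (hS₂pos : 0 < S₂)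
    (hg₁ : Nat.gcd R₁ S₁ = 1) (hg₂ : Nat.gcd R₂ S₂ = 1)
    (hi₁ : R₁' * R₁ ≡ 1 [MOD S₁]) (hi₂ : R₂' * R₂ ≡ 1 [MOD S₂])
    (x₀ α : ℕ) (hx₀ : x₀ < p) (hα : α < p) :
    let pij : ℕ → Fin m → ℕ := fun i j =>
      (∑ s : Fin (lam + 1), ∑ t : Fin (n + 1),
        if (s : ℕ) + (t : ℕ) = i then fc s * Bc t j else 0) % p
    let qij : ℕ → Fin m → ℕ := fun i j =>
      (∑ s : Fin (lam + 1), ∑ t : Fin (n + 1),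
        if (s : ℕ) + (t : ℕ) = i then hc s * Bc t j else 0) % p
    let Pij : ℕ → Fin m → ℕ := fun i j => (R₁ * pij i j) % S₁
    let Qij : ℕ → Fin m → ℕ := fun i j => (R₂ * qij i j) % S₂
    let F := (R₂' * ((α * ∑ s : Fin (lam + 1), fc s * x₀ ^ (s : ℕ)) % p)) % S₂
    let H := (R₁' * ((α * ∑ s : Fin (lam + 1), hc s * x₀ ^ (s : ℕ)) % p)) % S₁
    ∀ u : Fin m → ℕ,
      (∑ j, ∑ i ∈ Finset.range (n + lam + 1),
          (((F * Qij i j) % S₂) % p) * x₀ ^ i * u j) ≡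
        (∑ j, ∑ i ∈ Finset.range (n + lam + 1),
          (((H * Pij i j) % S₁) % p) * x₀ ^ i * u j) [MOD p] := by
  intro pij qij Pij Qij F H u
  have hp0 : 0 < p := by omega
  have hQ : ∀ i j, (F * Qij i j) % S₂
      = ((α * ∑ s : Fin (lam + 1), fc s * x₀ ^ (s : ℕ)) % p) * qij i j :=
    fun i j => key_mod p S₂ R₂ R₂' hp0 hS₂ hi₂ _ _ (Nat.mod_lt _ hp0) (Nat.mod_lt _ hp0)
  have hP : ∀ i j, (H * Pij i j) % S₁
      = ((α * ∑ s : Fin (lam + 1), hc s * x₀ ^ (s : ℕ)) % p) * pij i j :=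
    fun i j => key_mod p S₁ R₁ R₁' hp0 hS₁ hi₁ _ _ (Nat.mod_lt _ hp0) (Nat.mod_lt _ hp0)
  rw [← ZMod.natCast_eq_natCast_iff]
  simp only [hQ, hP, pij, qij]
  push_cast [ZMod.natCast_mod]
  refine Finset.sum_congr rfl fun j _ => ?_
  rw [pull_sum, pull_sum, conv_sum lam n (fun s => (hc s : ZMod p)) (fun t => (Bc t j : ZMod p)),
    conv_sum lam n (fun s => (fc s : ZMod p)) (fun t => (Bc t j : ZMod p))]
  ring
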